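/- arXiv:2306.09602 — 2 statements merged into one kernel-verified Lean document; each statement's English description precedes it below -/
import Mathlib

section
/- Let k be a field, σ a finite type, m a monomial order on σ →₀ ℕ, I an ideal of MvPolynomial σ k, and G a finite Gröbner basis of I with respect to m. If p and q are polynomials in MvPolynomial σ k that are both in normal form with respect to G (no term occurring with nonzero coefficient in p, respectively q, is divisible by the head term of any element of G) and p − q ∈ I, then p = q. -/
open MvPolynomial

/-- Head term of a polynomial with respect to a monomial order. -/
noncomputable def MonomialOrder.degree' {σ R : Type*} [CommSemiring R] (m : MonomialOrder σ)
    (p : MvPolynomial σ R) : σ →₀ ℕ :=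
  m.toSyn.symm (p.support.sup fun s => m.toSyn s)

/-- Head coefficient of a polynomial with respect to a monomial order. -/
noncomputable def MonomialOrder.leadCoeff' {σ R : Type*} [CommSemiring R] (m : MonomialOrder σ)
    (p : MvPolynomial σ R) : R :=
  p.coeff (m.degree' p)

lemma degree_mem_support {σ R : Type*} [CommSemiring R] (m : MonomialOrder σ)
    {p : MvPolynomial σ R} (hp : p ≠ 0) : m.degree' p ∈ p.support := by
  have hne : p.support.Nonempty := MvPolynomial.support_nonempty.mpr hp
  obtain ⟨s, hs, hmax⟩ := Finset.exists_mem_eq_sup p.support hne (fun s => m.toSyn s)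
  have : m.degree' p = s := by
    simp [MonomialOrder.degree', hmax]
  rwa [this]

/-- Uniqueness of normal forms with respect to a Gröbner basis over a field: two polynomials
in normal form with respect to G that are congruent modulo the ideal are equal. -/
theorem normalForm_unique {σ k : Type*} [Field k] [Finite σ]
    (m : MonomialOrder σ) (I : Ideal (MvPolynomial σ k)) (G : Finset (MvPolynomial σ k))
    (hG0 : ∀ g ∈ G, g ≠ 0) (hGI : (G : Set (MvPolynomial σ k)) ⊆ I)
    (hGB : Ideal.span {q : MvPolynomial σ k |
        ∃ g ∈ G, q = monomial (m.degree' g) (m.leadCoeff' g)} =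
      Ideal.span {q : MvPolynomial σ k |
        ∃ p ∈ I, p ≠ 0 ∧ q = monomial (m.degree' p) (m.leadCoeff' p)})
    (p q : MvPolynomial σ k)
    (hp : ∀ s ∈ p.support, ∀ g ∈ G, ¬ m.degree' g ≤ s)
    (hq : ∀ s ∈ q.support, ∀ g ∈ G, ¬ m.degree' g ≤ s)
    (hpq : p - q ∈ I) :
    p = q := by
  classical
  by_contra hne
  set r := p - q with hr
  have hr0 : r ≠ 0 := sub_ne_zero.mpr hne
  -- the head monomial of r lies in the span of head monomials of I
  have h1 : monomial (m.degree' r) (m.leadCoeff' r) ∈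
      Ideal.span {q : MvPolynomial σ k |
        ∃ p ∈ I, p ≠ 0 ∧ q = monomial (m.degree' p) (m.leadCoeff' p)} :=
    Ideal.subset_span ⟨r, hpq, hr0, rfl⟩
  rw [← hGB] at h1
  -- the span of head monomials of G equals the span of the corresponding pure monomials
  have hspan : Ideal.span {q : MvPolynomial σ k |
        ∃ g ∈ G, q = monomial (m.degree' g) (m.leadCoeff' g)} =
      Ideal.span ((fun s => monomial s (1 : k)) '' (m.degree' '' (G : Set (MvPolynomial σ k)))) := by
    apply le_antisymm <;> rw [Ideal.span_le] <;> rintro x hx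
    · obtain ⟨g, hg, rfl⟩ := hx
      have : (monomial (m.degree' g)) (m.leadCoeff' g) =
          C (m.leadCoeff' g) * monomial (m.degree' g) 1 := by
        rw [C_mul_monomial, mul_one]
      rw [this]
      exact Ideal.mul_mem_left _ _ (Ideal.subset_span ⟨m.degree' g, ⟨g, hg, rfl⟩, rfl⟩)
    · obtain ⟨s, ⟨g, hg, rfl⟩, rfl⟩ := hx
      show (monomial (m.degree' g)) (1:k) ∈ _
      have hc : m.leadCoeff' g ≠ 0 := by
        have := degree_mem_support m (hG0 g hg)
        exact MvPolynomial.mem_support_iff.mp this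
      have : (monomial (m.degree' g) (1 : k)) =
          C (m.leadCoeff' g)⁻¹ * monomial (m.degree' g) (m.leadCoeff' g) := by
        rw [C_mul_monomial, inv_mul_cancel₀ hc]
      rw [this]
      exact Ideal.mul_mem_left _ _ (Ideal.subset_span ⟨g, hg, rfl⟩)
  rw [hspan, mem_ideal_span_monomial_image] at h1
  have hdr : m.degree' r ∈ (monomial (m.degree' r) (m.leadCoeff' r)).support := by
    rw [MvPolynomial.support_monomial]
    have hc : m.leadCoeff' r ≠ 0 :=
      MvPolynomial.mem_support_iff.mp (degree_mem_support m hr0)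
    simp [hc]
  obtain ⟨s, ⟨g, hg, rfl⟩, hle⟩ := h1 _ hdr
  have hmem : m.degree' r ∈ p.support ∪ q.support :=
    MvPolynomial.support_sub σ p q (degree_mem_support m hr0)
  rcases Finset.mem_union.mp hmem with h | h
  · exact hp _ h g hg hle
  · exact hq _ h g hg hle
end

section
/- Let k be a field, σ a finite type, m a monomial order on σ →₀ ℕ, and I an ideal of MvPolynomial σ k. If G and G' are both reduced Gröbner bases of I with respect to m, then G = G'. -/
open MvPolynomial

/-- Head term of a polynomial with respect to a monomial order. -/
noncomputable def MonomialOrder.headDegree {σ R : Type*} [CommSemiring R] (m : MonomialOrder σ)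
    (p : MvPolynomial σ R) : σ →₀ ℕ :=
  m.toSyn.symm (p.support.sup fun s => m.toSyn s)

/-- Head coefficient of a polynomial with respect to a monomial order. -/
noncomputable def MonomialOrder.headCoeff {σ R : Type*} [CommSemiring R] (m : MonomialOrder σ)
    (p : MvPolynomial σ R) : R :=
  p.coeff (m.headDegree p)

/-- A Gröbner basis of an ideal. -/
def IsGroebnerBasis {σ k : Type*} [Field k] (m : MonomialOrder σ)
    (I : Ideal (MvPolynomial σ k)) (G : Finset (MvPolynomial σ k)) : Prop :=
  (∀ g ∈ G, g ≠ 0) ∧ (G : Set (MvPolynomial σ k)) ⊆ I ∧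
    Ideal.span {q : MvPolynomial σ k |
        ∃ g ∈ G, q = monomial (m.headDegree g) (m.headCoeff g)} =
      Ideal.span {q : MvPolynomial σ k |
        ∃ p ∈ I, p ≠ 0 ∧ q = monomial (m.headDegree p) (m.headCoeff p)}

/-- A reduced Gröbner basis: every element is monic and none of its exponent vectors is
divisible by the head term of another element of the basis. -/
def IsReducedGroebnerBasis {σ k : Type*} [Field k] (m : MonomialOrder σ)
    (I : Ideal (MvPolynomial σ k)) (G : Finset (MvPolynomial σ k)) : Prop :=
  IsGroebnerBasis m I G ∧
    (∀ g ∈ G, m.headCoeff g = 1) ∧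
    ∀ g ∈ G, ∀ g' ∈ G, g' ≠ g → ∀ s ∈ g.support, ¬ m.headDegree g' ≤ s

section Aux

variable {σ k : Type*} [Field k] (m : MonomialOrder σ)

lemma degree_mem_support_s9 {p : MvPolynomial σ k} (hp : p ≠ 0) : m.headDegree p ∈ p.support := by
  obtain ⟨s, hs, hsup⟩ := Finset.exists_mem_eq_sup p.support
    (Finset.nonempty_iff_ne_empty.mpr (by rwa [Ne, MvPolynomial.support_eq_empty])) (fun s => m.toSyn s)
  have : m.headDegree p = s := by
    rw [MonomialOrder.headDegree, hsup, AddEquiv.symm_apply_apply]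
  rwa [this]

lemma toSyn_le_degree {p : MvPolynomial σ k} {s : σ →₀ ℕ} (hs : s ∈ p.support) :
    m.toSyn s ≤ m.toSyn (m.headDegree p) := by
  rw [MonomialOrder.headDegree, AddEquiv.apply_symm_apply]
  exact Finset.le_sup hs

lemma eq_degree_of_degree_le {p : MvPolynomial σ k} {s : σ →₀ ℕ} (hs : s ∈ p.support)
    (h : m.headDegree p ≤ s) : s = m.headDegree p := by
  have h1 : m.toSyn (m.headDegree p) ≤ m.toSyn s := m.toSyn_monotone h
  have h2 := toSyn_le_degree m hs
  exact m.toSyn.injective (le_antisymm h2 h1)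

lemma aux_span_eq {I : Ideal (MvPolynomial σ k)} {G : Finset (MvPolynomial σ k)}
    (hG : IsReducedGroebnerBasis m I G) :
    {q : MvPolynomial σ k | ∃ g ∈ G, q = monomial (m.headDegree g) (m.headCoeff g)} =
      (fun s => monomial s (1 : k)) '' {s | ∃ g ∈ G, s = m.headDegree g} := by
  ext q
  constructor
  · rintro ⟨g, hg, rfl⟩
    exact ⟨m.headDegree g, ⟨g, hg, rfl⟩, by rw [hG.2.1 g hg]⟩
  · rintro ⟨s, ⟨g, hg, rfl⟩, rfl⟩
    exact ⟨g, hg, by rw [hG.2.1 g hg]⟩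

lemma exists_div {I : Ideal (MvPolynomial σ k)} {G : Finset (MvPolynomial σ k)}
    (hG : IsReducedGroebnerBasis m I G) {p : MvPolynomial σ k} (hpI : p ∈ I) (hp : p ≠ 0) :
    ∃ g ∈ G, m.headDegree g ≤ m.headDegree p := by
  classical
  have hlc : m.headCoeff p ≠ 0 := by
    have := degree_mem_support_s9 m hp
    rwa [mem_support_iff] at this
  have h1 : (monomial (m.headDegree p) (m.headCoeff p) : MvPolynomial σ k) ∈
      Ideal.span {q : MvPolynomial σ k | ∃ g ∈ G, q = monomial (m.headDegree g) (m.headCoeff g)} := by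
    rw [hG.1.2.2]
    exact Ideal.subset_span ⟨p, hpI, hp, rfl⟩
  rw [aux_span_eq m hG, mem_ideal_span_monomial_image] at h1
  obtain ⟨s, ⟨g, hg, rfl⟩, hle⟩ := h1 (m.headDegree p) (by
    rw [mem_support_iff, coeff_monomial, if_pos rfl]; exact hlc)
  exact ⟨g, hg, hle⟩

lemma subset_aux {I : Ideal (MvPolynomial σ k)} {G G' : Finset (MvPolynomial σ k)}
    (hG : IsReducedGroebnerBasis m I G) (hG' : IsReducedGroebnerBasis m I G') : G ⊆ G' := by
  classical
  intro g hg
  have hg0 : g ≠ 0 := hG.1.1 g hg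
  have hgI : g ∈ I := hG.1.2.1 hg
  obtain ⟨g', hg', hle⟩ := exists_div m hG' hgI hg0
  have hg'0 : g' ≠ 0 := hG'.1.1 g' hg'
  have hg'I : g' ∈ I := hG'.1.2.1 hg'
  obtain ⟨g'', hg'', hle2⟩ := exists_div m hG hg'I hg'0
  have hgg : g'' = g := by
    by_contra hne
    exact hG.2.2 g hg g'' hg'' hne (m.headDegree g) (degree_mem_support_s9 m hg0) (hle2.trans hle)
  rw [hgg] at hle2
  have hdeq : m.headDegree g' = m.headDegree g := le_antisymm hle hle2
  -- Now show g = g'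
  have : g - g' = 0 := by
    by_contra hne
    have hpI : g - g' ∈ I := I.sub_mem hgI hg'I
    obtain ⟨h, hh, hhle⟩ := exists_div m hG hpI hne
    obtain ⟨h', hh', hh'le⟩ := exists_div m hG' hpI hne
    have hdp : m.headDegree (g - g') ∈ (g - g').support := degree_mem_support_s9 m hne
    have hdpne : m.headDegree (g - g') ≠ m.headDegree g := by
      intro heq
      rw [mem_support_iff, heq] at hdp
      apply hdp
      have h1 : g.coeff (m.headDegree g) = 1 := hG.2.1 g hg
      have h2 : g'.coeff (m.headDegree g) = 1 := by
        have := hG'.2.1 g' hg'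
        rwa [MonomialOrder.headCoeff, hdeq] at this
      simp [coeff_sub, h1, h2]
    have hmem : m.headDegree (g - g') ∈ g.support ∪ g'.support := by
      rw [mem_support_iff] at hdp
      rw [Finset.mem_union, mem_support_iff, mem_support_iff]
      by_contra hc
      push_neg at hc
      apply hdp
      rw [coeff_sub, hc.1, hc.2, sub_zero]
    rw [Finset.mem_union] at hmem
    rcases hmem with hmem | hmem
    · rcases eq_or_ne h g with rfl | hne'
      · exact hdpne (eq_degree_of_degree_le m hmem hhle)
      · exact hG.2.2 g hg h hh hne' _ hmem hhle
    · rcases eq_or_ne h' g' with rfl | hne'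
      · exact hdpne (by rw [eq_degree_of_degree_le m hmem hh'le, hdeq])
      · exact hG'.2.2 g' hg' h' hh' hne' _ hmem hh'le
  rw [sub_eq_zero] at this
  rwa [this]

end Aux

/-- Reduced Gröbner bases are unique. -/
theorem reducedGroebnerBasis_unique {σ k : Type*} [Field k] [Finite σ]
    (m : MonomialOrder σ) (I : Ideal (MvPolynomial σ k)) (G G' : Finset (MvPolynomial σ k))
    (hG : IsReducedGroebnerBasis m I G) (hG' : IsReducedGroebnerBasis m I G') :
    G = G' :=
  Finset.Subset.antisymm (subset_aux m hG hG') (subset_aux m hG' hG)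
end
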